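/- Let x, x̂ ∈ R^n with ‖x̂‖₁ - α‖x̂‖₂ ≤ ‖x‖₁ - α‖x‖₂ for some 0 < α ≤ 1, and set h = x̂ - x. Then ‖h_{-max(s)}‖₁ - α‖h_{-max(s)}‖₂ ≤ ‖h_{max(s)}‖₁ + 2‖x_{-max(s)}‖₁ + α‖h_{max(s)}‖₂. -/
import Mathlib


open Finset

noncomputable def l1 {n : ℕ} (x : Fin n → ℝ) : ℝ := ∑ i, |x i|
noncomputable def l2 {n : ℕ} (x : Fin n → ℝ) : ℝ := Real.sqrt (∑ i, (x i) ^ 2)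
noncomputable def linf {n : ℕ} (x : Fin n → ℝ) : ℝ := ‖x‖

/-- `restrict T x` is the vector equal to `x` on `T` and `0` elsewhere. -/
def restrict {n : ℕ} (T : Finset (Fin n)) (x : Fin n → ℝ) : Fin n → ℝ :=
  fun i => if i ∈ T then x i else 0

/-- `T` indexes `s` largest-in-absolute-value entries of `h`. -/
def IsMaxS {n : ℕ} (s : ℕ) (h : Fin n → ℝ) (T : Finset (Fin n)) : Prop :=
  T.card = s ∧ ∀ i ∈ T, ∀ j ∉ T, |h j| ≤ |h i|

/-- number of nonzero entries. -/
noncomputable def l0 {n : ℕ} (x : Fin n → ℝ) : ℕ := (Finset.univ.filter fun i => x i ≠ 0).card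

lemma l1_restrict {n : ℕ} (T : Finset (Fin n)) (x : Fin n → ℝ) :
    l1 (_root_.restrict T x) = ∑ i ∈ T, |x i| := by
  unfold l1 _root_.restrict
  rw [← Finset.sum_subset (Finset.subset_univ T)]
  · exact Finset.sum_congr rfl fun i hi => by simp [hi]
  · intro i _ hi; simp [hi]

lemma l2_eq {n : ℕ} (x : Fin n → ℝ) :
    l2 x = ‖(EuclideanSpace.equiv (Fin n) ℝ).symm x‖ := by
  rw [EuclideanSpace.norm_eq]
  simp [l2, sq_abs]

lemma l2_add_le {n : ℕ} (x y : Fin n → ℝ) : l2 (x + y) ≤ l2 x + l2 y := by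
  rw [l2_eq, l2_eq, l2_eq, map_add]
  exact norm_add_le _ _

/-- swap lemma: sum of |h| over a max-s set dominates sum over any set of the same card. -/
lemma swap_sum {n : ℕ} (h : Fin n → ℝ) (T S : Finset (Fin n)) (hcard : T.card = S.card)
    (hmax : ∀ i ∈ T, ∀ j ∉ T, |h j| ≤ |h i|) :
    ∑ i ∈ S, |h i| ≤ ∑ i ∈ T, |h i| := by
  have h1 : (S \ T).card + (S ∩ T).card = S.card := Finset.card_sdiff_add_card_inter S T
  have h2 : (T \ S).card + (T ∩ S).card = T.card := Finset.card_sdiff_add_card_inter T S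
  have hic : (S ∩ T).card = (T ∩ S).card := by rw [Finset.inter_comm]
  have hST : (S \ T).card = (T \ S).card := by omega
  have e : (S \ T : Finset (Fin n)) ≃ (T \ S : Finset (Fin n)) := Finset.equivOfCardEq hST
  have key : ∑ j ∈ S \ T, |h j| ≤ ∑ i ∈ T \ S, |h i| := by
    rw [← Finset.sum_attach (S \ T) fun j => |h j|, ← Finset.sum_attach (T \ S) fun j => |h j|]
    calc ∑ j ∈ (S \ T).attach, |h j.1|
        ≤ ∑ j ∈ (S \ T).attach, |h (e j).1| := by
          refine Finset.sum_le_sum fun j _ => ?_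
          have hjT : j.1 ∉ T := (Finset.mem_sdiff.mp j.2).2
          have heT : (e j).1 ∈ T := (Finset.mem_sdiff.mp (e j).2).1
          exact hmax _ heT _ hjT
      _ = ∑ i ∈ (T \ S).attach, |h i.1| := by
          have := Equiv.sum_comp e (fun i : {x // x ∈ T \ S} => |h i.1|)
          rw [Finset.attach_eq_univ, Finset.attach_eq_univ]
          exact this
  have hsS := Finset.sum_inter_add_sum_sdiff S T (fun i => |h i|)
  have hsT := Finset.sum_inter_add_sum_sdiff T S (fun i => |h i|)
  have : ∑ i ∈ S ∩ T, |h i| = ∑ i ∈ T ∩ S, |h i| := by rw [Finset.inter_comm]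
  linarith

lemma abs_lower (a b : ℝ) : |a| - |b| ≤ |a + b| := by
  have h := abs_add_le (a + b) (-b)
  simp only [add_neg_cancel_right, abs_neg] at h
  linarith

theorem stmt4 {n s : ℕ} (x xhat : Fin n → ℝ) (α : ℝ) (hα0 : 0 < α) (hα1 : α ≤ 1)
    (hmin : l1 xhat - α * l2 xhat ≤ l1 x - α * l2 x)
    (Th : Finset (Fin n)) (hTh : IsMaxS s (xhat - x) Th)
    (Tx : Finset (Fin n)) (hTx : IsMaxS s x Tx) :
    l1 (restrict Thᶜ (xhat - x)) - α * l2 (restrict Thᶜ (xhat - x)) ≤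
      l1 (restrict Th (xhat - x)) + 2 * l1 (restrict Txᶜ x) +
        α * l2 (restrict Th (xhat - x)) := by
  set h : Fin n → ℝ := xhat - x with hh
  have hdef : ∀ i, h i = xhat i - x i := fun i => rfl
  set a1 := ∑ i ∈ Tx, |x i|
  set a2 := ∑ i ∈ Txᶜ, |x i|
  set b1 := ∑ i ∈ Tx, |h i|
  set b2 := ∑ i ∈ Txᶜ, |h i|
  set c1 := ∑ i ∈ Th, |h i|
  set c2 := ∑ i ∈ Thᶜ, |h i|
  -- (1) lower bound on l1 xhat
  have e1 : a1 - b1 ≤ ∑ i ∈ Tx, |xhat i| := by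
    rw [← Finset.sum_sub_distrib]
    refine Finset.sum_le_sum fun i _ => ?_
    have hx : x i + h i = xhat i := by rw [hdef i]; ring
    have := abs_lower (x i) (h i)
    rw [hx] at this; exact this
  have e2 : b2 - a2 ≤ ∑ i ∈ Txᶜ, |xhat i| := by
    rw [← Finset.sum_sub_distrib]
    refine Finset.sum_le_sum fun i _ => ?_
    have hx : h i + x i = xhat i := by rw [hdef i]; ring
    have := abs_lower (h i) (x i)
    rw [hx] at this; exact this
  have hl1xhat : a1 - b1 + (b2 - a2) ≤ l1 xhat := by
    have := Finset.sum_add_sum_compl Tx (fun i => |xhat i|)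
    unfold l1; linarith
  have hl1x : l1 x = a1 + a2 := (Finset.sum_add_sum_compl Tx (fun i => |x i|)).symm
  -- (2) triangle for l2 xhat
  have hxhat : xhat = x + h := by funext i; simp [hdef]
  have ht2 : l2 xhat ≤ l2 x + l2 h := by rw [hxhat]; exact l2_add_le x h
  have ht2' : α * l2 xhat ≤ α * (l2 x + l2 h) := by nlinarith
  -- combine with hmin : b2 ≤ b1 + 2*a2 + α * l2 h
  have hcone : b2 ≤ b1 + 2 * a2 + α * l2 h := by linarith
  -- (4) swap inequalities
  have hb1c1 : b1 ≤ c1 := swap_sum h Th Tx (hTx.1 ▸ hTh.1) hTh.2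
  have htot : c1 + c2 = b1 + b2 := by
    have h1 := Finset.sum_add_sum_compl Th (fun i => |h i|)
    have h2 := Finset.sum_add_sum_compl Tx (fun i => |h i|)
    show (∑ i ∈ Th, |h i|) + ∑ i ∈ Thᶜ, |h i| = (∑ i ∈ Tx, |h i|) + ∑ i ∈ Txᶜ, |h i|
    rw [h1, h2]
  have hc2b2 : c2 ≤ b2 := by linarith
  -- (5) split of l2 h
  have hsplit : h = _root_.restrict Th h + _root_.restrict Thᶜ h := by
    funext i
    by_cases hi : i ∈ Th <;> simp [_root_.restrict, hi]
  have ht5 : l2 h ≤ l2 (restrict Th h) + l2 (restrict Thᶜ h) := by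
    conv_lhs => rw [hsplit]
    exact l2_add_le _ _
  have ht5' : α * l2 h ≤ α * (l2 (restrict Th h) + l2 (restrict Thᶜ h)) := by nlinarith
  -- finish
  rw [l1_restrict, l1_restrict, l1_restrict]
  show c2 - α * l2 (_root_.restrict Thᶜ h) ≤ c1 + 2 * a2 + α * l2 (_root_.restrict Th h)
  linarith
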